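/- Moreau-like identity for the extended proximal operator: for a proper convex lower-semicontinuous function f on ℝⁿ and a symmetric positive definite matrix M, one has Prox_{f*}^{M}(y) = y − M⁻¹ Prox_{f}^{M⁻¹}(M y), where Prox_g^{A}(y) = argmin_x (1/2)‖x−y‖_A² + g(x) with ‖x‖_A² = xᵀAx, and f* is the convex conjugate of f. -/

import Mathlib

open Matrix

private lemma quad_smul_expand {n : ℕ} (S : Matrix (Fin n) (Fin n) ℝ) (a b : Fin n → ℝ) (t : ℝ) :
    (a + t • b) ⬝ᵥ S *ᵥ (a + t • b) =
      a ⬝ᵥ S *ᵥ a + t * (a ⬝ᵥ S *ᵥ b) + t * (b ⬝ᵥ S *ᵥ a) + t ^ 2 * (b ⬝ᵥ S *ᵥ b) := by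
  simp only [Matrix.mulVec_add, Matrix.mulVec_smul, dotProduct_add, add_dotProduct,
    dotProduct_smul, smul_dotProduct, smul_eq_mul]
  ring

private lemma ereal_exists_real (e : EReal) (h1 : e ≠ ⊥) (h2 : e ≠ ⊤) : ∃ d : ℝ, e = d := by
  induction e using EReal.rec <;> simp_all

/-- Moreau-like identity for the extended (matrix-weighted) proximal operator:
for a proper convex lsc `f : ℝⁿ → ℝ ∪ {+∞}` and a symmetric positive definite `M`,
`Prox_{f*}^M (y) = y - M⁻¹ Prox_f^{M⁻¹}(M y)`: if `v` minimizes
`x ↦ ½⟪x - My, M⁻¹(x - My)⟫ + f x`, then `y - M⁻¹ v` minimizes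
`x ↦ ½⟪x - y, M(x - y)⟫ + f* x`, where `f*` is the convex conjugate of `f`. -/
theorem stmt_8 (n : ℕ) (f : (Fin n → ℝ) → EReal)
    (hproper : ∃ x, f x ≠ ⊤)
    (hconv : ∀ x y : Fin n → ℝ, ∀ t : ℝ, 0 ≤ t → t ≤ 1 →
      f (t • x + (1 - t) • y) ≤ (t : EReal) * f x + ((1 - t : ℝ) : EReal) * f y)
    (hlsc : LowerSemicontinuous f)
    (M : Matrix (Fin n) (Fin n) ℝ) (hMsymm : M.IsSymm) (hM : M.PosDef)
    (fstar : (Fin n → ℝ) → EReal)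
    (hfstar : ∀ z, fstar z = ⨆ x : Fin n → ℝ, ((z ⬝ᵥ x : ℝ) : EReal) - f x)
    (y v : Fin n → ℝ)
    (hv : ∀ x : Fin n → ℝ,
      (((1 / 2 : ℝ) * ((v - M.mulVec y) ⬝ᵥ M⁻¹.mulVec (v - M.mulVec y)) : ℝ) : EReal) + f v ≤
      (((1 / 2 : ℝ) * ((x - M.mulVec y) ⬝ᵥ M⁻¹.mulVec (x - M.mulVec y)) : ℝ) : EReal) + f x) :
    ∀ x : Fin n → ℝ,
      (((1 / 2 : ℝ) * ((y - M⁻¹.mulVec v - y) ⬝ᵥ M.mulVec (y - M⁻¹.mulVec v - y)) : ℝ) : EReal)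
        + fstar (y - M⁻¹.mulVec v) ≤
      (((1 / 2 : ℝ) * ((x - y) ⬝ᵥ M.mulVec (x - y)) : ℝ) : EReal) + fstar x := by
  intro x
  set N : Matrix (Fin n) (Fin n) ℝ := M⁻¹ with hNdef
  have hdet : IsUnit M.det := hM.det_pos.ne'.isUnit
  have hNM : ∀ z, N *ᵥ (M *ᵥ z) = z := fun z => by
    rw [hNdef, Matrix.mulVec_mulVec, Matrix.nonsing_inv_mul M hdet, Matrix.one_mulVec]
  have hMN : ∀ z, M *ᵥ (N *ᵥ z) = z := fun z => by
    rw [hNdef, Matrix.mulVec_mulVec, Matrix.mul_nonsing_inv M hdet, Matrix.one_mulVec]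
  have hMsym : Mᵀ = M := hMsymm
  have hNsym : Nᵀ = N := by
    rw [hNdef, Matrix.transpose_nonsing_inv, hMsym]
  have sdM : ∀ a b, a ⬝ᵥ M *ᵥ b = b ⬝ᵥ M *ᵥ a := fun a b => by
    rw [Matrix.dotProduct_mulVec, ← Matrix.mulVec_transpose, hMsym, dotProduct_comm]
  have sdN : ∀ a b, a ⬝ᵥ N *ᵥ b = b ⬝ᵥ N *ᵥ a := fun a b => by
    rw [Matrix.dotProduct_mulVec, ← Matrix.mulVec_transpose, hNsym, dotProduct_comm]
  have hNpsd : ∀ z, 0 ≤ z ⬝ᵥ N *ᵥ z := fun z => by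
    simpa using (hM.inv).posSemidef.dotProduct_mulVec_nonneg z
  have hMpsd : ∀ z, 0 ≤ z ⬝ᵥ M *ᵥ z := fun z => by
    simpa using hM.posSemidef.dotProduct_mulVec_nonneg z
  set u : Fin n → ℝ := y - N *ᵥ v with hu
  -- value of the first objective at v is not ⊤
  have hfv_ne_top : f v ≠ ⊤ := by
    obtain ⟨x₀, hx₀⟩ := hproper
    intro hfv
    have h := hv x₀
    rw [hfv, EReal.coe_add_top] at h
    exact (EReal.add_lt_top (EReal.coe_ne_top _) hx₀).not_ge h
  rcases eq_or_ne (f v) ⊥ with hfv_bot | hfv_ne_bot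
  · -- degenerate case: f v = ⊥ makes fstar ≡ ⊤
    have hall : ∀ z, fstar z = ⊤ := fun z => by
      rw [hfstar]
      refine top_unique (le_trans ?_ (le_iSup (fun w => ((z ⬝ᵥ w : ℝ) : EReal) - f w) v))
      rw [hfv_bot, EReal.coe_sub_bot]
    rw [hall, hall, EReal.coe_add_top, EReal.coe_add_top]
  · -- main case: f v is a real number
    obtain ⟨c, hc⟩ := ereal_exists_real (f v) hfv_ne_bot hfv_ne_top
    -- f never takes the value ⊥
    have hf_ne_bot : ∀ w, f w ≠ ⊥ := by
      intro w hw
      have h := hv w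
      rw [hc, hw, EReal.add_bot, ← EReal.coe_add] at h
      exact (EReal.bot_lt_coe _).not_ge h
    -- subgradient inequality: u ∈ ∂f(v)
    have hsub : ∀ w : Fin n → ℝ, ((c + u ⬝ᵥ (w - v) : ℝ) : EReal) ≤ f w := by
      intro w
      rcases eq_or_ne (f w) ⊤ with hfw | hfw
      · rw [hfw]; exact le_top
      obtain ⟨d, hd⟩ := ereal_exists_real (f w) (hf_ne_bot w) hfw
      rw [hd, EReal.coe_le_coe_iff]
      set Δ : Fin n → ℝ := w - v with hΔ
      set a2 : ℝ := Δ ⬝ᵥ N *ᵥ Δ with ha2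
      have ha2nn : 0 ≤ a2 := hNpsd Δ
      -- for every t ∈ (0,1]
      have key : ∀ t : ℝ, 0 < t → t ≤ 1 → c + u ⬝ᵥ Δ - t / 2 * a2 ≤ d := by
        intro t ht ht1
        have hpt : v + t • Δ = t • w + (1 - t) • v := by
          rw [hΔ]; module
        have hconv' := hconv w v t ht.le ht1
        rw [← hpt, hc, hd, ← EReal.coe_mul, ← EReal.coe_mul, ← EReal.coe_add] at hconv'
        have h := (hv (v + t • Δ)).trans (add_le_add le_rfl hconv')
        rw [hc, ← EReal.coe_add, ← EReal.coe_add, EReal.coe_le_coe_iff] at h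
        -- expand the quadratic at v + t • Δ
        have hexp : (v + t • Δ - M *ᵥ y) ⬝ᵥ N *ᵥ (v + t • Δ - M *ᵥ y)
            = (v - M *ᵥ y) ⬝ᵥ N *ᵥ (v - M *ᵥ y)
              + 2 * t * (Δ ⬝ᵥ N *ᵥ (v - M *ᵥ y)) + t ^ 2 * a2 := by
          have hre : v + t • Δ - M *ᵥ y = (v - M *ᵥ y) + t • Δ := by abel
          rw [hre, quad_smul_expand, sdN (v - M *ᵥ y) Δ, ha2]
          ring
        have hcross : Δ ⬝ᵥ N *ᵥ (v - M *ᵥ y) = -(u ⬝ᵥ Δ) := by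
          have e1 : N *ᵥ (v - M *ᵥ y) = N *ᵥ v - y := by
            rw [Matrix.mulVec_sub, hNM]
          rw [e1, hu, dotProduct_sub Δ (N *ᵥ v) y, sub_dotProduct y (N *ᵥ v) Δ,
            dotProduct_comm Δ (N *ᵥ v), dotProduct_comm Δ y]
          ring
        rw [hexp, hcross] at h
        nlinarith [h, ht, sq_nonneg t]
      -- pass to the limit t → 0⁺
      by_contra hcon
      push_neg at hcon
      set ε : ℝ := c + u ⬝ᵥ Δ - d with hε
      have hεpos : 0 < ε := by rw [hε]; linarith
      set t : ℝ := min 1 (ε / (a2 + 1)) with htdef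
      have htpos : 0 < t := lt_min one_pos (div_pos hεpos (by linarith))
      have ht1 : t ≤ 1 := min_le_left _ _
      have htle : t ≤ ε / (a2 + 1) := min_le_right _ _
      have hk := key t htpos ht1
      have h2 : t * (a2 + 1) ≤ ε := by
        rw [← le_div_iff₀ (by linarith : (0:ℝ) < a2 + 1)]; exact htle
      nlinarith
    -- fstar u ≤ ⟨u, v⟩ - c
    have hfsu : fstar u ≤ ((u ⬝ᵥ v - c : ℝ) : EReal) := by
      rw [hfstar]
      refine iSup_le fun w => ?_
      rcases eq_or_ne (f w) ⊤ with hfw | hfw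
      · rw [hfw, EReal.sub_top]; exact bot_le
      obtain ⟨d, hd⟩ := ereal_exists_real (f w) (hf_ne_bot w) hfw
      have hs := hsub w
      rw [hd, EReal.coe_le_coe_iff] at hs
      rw [hd, ← EReal.coe_sub, EReal.coe_le_coe_iff]
      have hdot : u ⬝ᵥ (w - v) = u ⬝ᵥ w - u ⬝ᵥ v := dotProduct_sub u w v
      linarith
    -- fstar x ≥ ⟨x, v⟩ - c
    have hfsx : ((x ⬝ᵥ v - c : ℝ) : EReal) ≤ fstar x := by
      rw [hfstar]
      refine le_trans ?_ (le_iSup (fun w => ((x ⬝ᵥ w : ℝ) : EReal) - f w) v)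
      rw [hc, ← EReal.coe_sub]
    -- the purely algebraic comparison
    have halg : (1 / 2 : ℝ) * ((y - N *ᵥ v - y) ⬝ᵥ M *ᵥ (y - N *ᵥ v - y)) + (u ⬝ᵥ v - c)
        ≤ (1 / 2 : ℝ) * ((x - y) ⬝ᵥ M *ᵥ (x - y)) + (x ⬝ᵥ v - c) := by
      have hz := hMpsd (x - y + N *ᵥ v)
      have hexp : (x - y + N *ᵥ v) ⬝ᵥ M *ᵥ (x - y + N *ᵥ v)
          = (x - y) ⬝ᵥ M *ᵥ (x - y) + 2 * ((x - y) ⬝ᵥ v) + (N *ᵥ v) ⬝ᵥ v := by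
        have h1 : (x - y + N *ᵥ v) = (x - y) + (1 : ℝ) • (N *ᵥ v) := by
          rw [one_smul]
        rw [h1, quad_smul_expand, ← sdM (x - y) (N *ᵥ v), hMN v]
        ring
      have hA : (y - N *ᵥ v - y) ⬝ᵥ M *ᵥ (y - N *ᵥ v - y) = (N *ᵥ v) ⬝ᵥ v := by
        have h1 : y - N *ᵥ v - y = -(N *ᵥ v) := by abel
        rw [h1, Matrix.mulVec_neg, dotProduct_neg, neg_dotProduct, neg_neg, hMN v]
      have hud : u ⬝ᵥ v = y ⬝ᵥ v - (N *ᵥ v) ⬝ᵥ v := by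
        rw [hu, sub_dotProduct]
      have hxy : (x - y) ⬝ᵥ v = x ⬝ᵥ v - y ⬝ᵥ v := sub_dotProduct x y v
      rw [hA, hud]
      nlinarith [hz, hexp, hxy]
    -- put everything together
    calc (((1 / 2 : ℝ) * ((y - N *ᵥ v - y) ⬝ᵥ M *ᵥ (y - N *ᵥ v - y)) : ℝ) : EReal)
          + fstar (y - N *ᵥ v)
        ≤ (((1 / 2 : ℝ) * ((y - N *ᵥ v - y) ⬝ᵥ M *ᵥ (y - N *ᵥ v - y)) : ℝ) : EReal)
          + ((u ⬝ᵥ v - c : ℝ) : EReal) := add_le_add le_rfl hfsu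
      _ = (((1 / 2 : ℝ) * ((y - N *ᵥ v - y) ⬝ᵥ M *ᵥ (y - N *ᵥ v - y)) + (u ⬝ᵥ v - c) : ℝ) : EReal) := by
          rw [EReal.coe_add]
      _ ≤ (((1 / 2 : ℝ) * ((x - y) ⬝ᵥ M *ᵥ (x - y)) + (x ⬝ᵥ v - c) : ℝ) : EReal) :=
          EReal.coe_le_coe_iff.mpr halg
      _ = (((1 / 2 : ℝ) * ((x - y) ⬝ᵥ M *ᵥ (x - y)) : ℝ) : EReal) + ((x ⬝ᵥ v - c : ℝ) : EReal) := by
          rw [EReal.coe_add]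
      _ ≤ (((1 / 2 : ℝ) * ((x - y) ⬝ᵥ M *ᵥ (x - y)) : ℝ) : EReal) + fstar x :=
          add_le_add le_rfl hfsx
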